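/- Let d ≥ 2 and n ≥ 1 be integers and set δ := 1/(n+2), and let e := (1,…,1) ∈ ℝ^d. Let x ∈ S^{n+δ} with δ < x_d ≤ 1+δ, let v ∈ ℤ^d with all components nonnegative and v_d = 0, set w := x − (1−δ)v, and let π be a permutation of {1,…,d} such that: (i) 1+δ ≥ w_{π(1)} ≥ w_{π(2)} ≥ … ≥ w_{π(d)} ≥ δ; (ii) w_j < 1 for all j < d; (iii) whenever w_{π(j)} = w_{π(j+1)} for 1 ≤ j < d, one has π(j) < π(j+1); and (iv) π⁻¹(d) < d. Then the pair (v,π) is admissible for n+1 (i.e. v ∈ S^n and for every j < d with v_j = v_{j+1}, π⁻¹(j) < π⁻¹(j+1)), and x belongs to the Kuhn simplex k((1−δ)v + δe, π). -/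
import Mathlib


/-- The right `d`-simplex `S^α = {x ∈ ℝ^d : α ≥ x_1 ≥ x_2 ≥ … ≥ x_d ≥ 0}`
(coordinates indexed by `Fin d`, in order). -/
def Sset (d : ℕ) (α : ℝ) : Set (Fin d → ℝ) :=
  {x | (∀ i : Fin d, 0 ≤ x i ∧ x i ≤ α) ∧ ∀ i j : Fin d, i ≤ j → x j ≤ x i}

/-- The Kuhn simplex `k(v,π) = {x : 1 ≥ (x−v)_{π(1)} ≥ … ≥ (x−v)_{π(d)} ≥ 0}`. -/
def kuhn (d : ℕ) (v : Fin d → ℝ) (π : Equiv.Perm (Fin d)) : Set (Fin d → ℝ) :=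
  {x | (∀ i : Fin d, 0 ≤ x (π i) - v (π i) ∧ x (π i) - v (π i) ≤ 1) ∧
       ∀ i j : Fin d, i ≤ j → x (π j) - v (π j) ≤ x (π i) - v (π i)}

/-- `(v,π)` with `v ∈ ℤ^d` is admissible for `m` if `v ∈ S^{m-1}` and whenever
`v_j = v_{j+1}`, `j` precedes `j+1` in `π`, i.e. `π⁻¹(j) < π⁻¹(j+1)`. -/
def admissible (d m : ℕ) (v : Fin d → ℤ) (π : Equiv.Perm (Fin d)) : Prop :=
  ((fun i => (v i : ℝ)) ∈ Sset d ((m : ℝ) - 1)) ∧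
  ∀ (j : Fin d) (h : (j : ℕ) + 1 < d),
    v j = v ⟨(j : ℕ) + 1, h⟩ → π.symm j < π.symm ⟨(j : ℕ) + 1, h⟩

lemma chain_lt {d : ℕ} (w : Fin d → ℝ) (π : Equiv.Perm (Fin d))
    (hmono : ∀ i j : Fin d, i ≤ j → w (π j) ≤ w (π i))
    (hiii : ∀ (j : Fin d) (h : (j : ℕ) + 1 < d),
        w (π j) = w (π ⟨(j : ℕ) + 1, h⟩) → π j < π ⟨(j : ℕ) + 1, h⟩) :
    ∀ (m : ℕ) (a b : Fin d), (a : ℕ) = (b : ℕ) + m + 1 →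
      w (π b) = w (π a) → π b < π a := by
  intro m
  induction m with
  | zero =>
    intro a b hab he
    have h' : (b : ℕ) + 1 < d := by have := a.isLt; omega
    have ha : a = ⟨(b : ℕ) + 1, h'⟩ := Fin.ext (by simp; omega)
    rw [ha] at he ⊢
    exact hiii b h' he
  | succ m ih =>
    intro a b hab he
    have hb1 : (b : ℕ) + 1 < d := by have := a.isLt; omega
    have h1 : w (π ⟨(b : ℕ) + 1, hb1⟩) ≤ w (π b) :=
      hmono b _ (by simp [Fin.le_def])
    have h2 : w (π a) ≤ w (π ⟨(b : ℕ) + 1, hb1⟩) :=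
      hmono _ a (by simp [Fin.le_def]; omega)
    have he1 : w (π b) = w (π ⟨(b : ℕ) + 1, hb1⟩) :=
      le_antisymm (by rw [he]; exact h2) h1
    have he2 : w (π ⟨(b : ℕ) + 1, hb1⟩) = w (π a) := by rw [← he1, he]
    exact lt_trans (hiii b hb1 he1) (ih a _ (by simp; omega) he2)

/-- if `x ∈ S^{n+δ}` with `δ < x_d ≤ 1+δ`, `v ∈ ℤ^d_+` with `v_d = 0`,
`w = x - (1-δ)v`, and `π` satisfies
(i) `1+δ ≥ w_{π(1)} ≥ … ≥ w_{π(d)} ≥ δ`,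
(ii) `w_j < 1` for all `j < d`,
(iii) equal components of `w` are ordered by index in `π`, and
(iv) `π⁻¹(d) < d`,
then `(v,π)` is admissible for `n+1` and `x ∈ k((1-δ)v + δe, π)`. -/
theorem type_b_cover (d n : ℕ) (hd : 2 ≤ d) (hn : 1 ≤ n)
    (δ : ℝ) (hδ : δ = ((n : ℝ) + 2)⁻¹)
    (x : Fin d → ℝ) (hx : x ∈ Sset d ((n : ℝ) + δ))
    (hxd1 : δ < x ⟨d - 1, by omega⟩) (hxd2 : x ⟨d - 1, by omega⟩ ≤ 1 + δ)
    (v : Fin d → ℤ) (hv : ∀ i, 0 ≤ v i) (hvd : v ⟨d - 1, by omega⟩ = 0)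
    (w : Fin d → ℝ) (hw : w = fun i => x i - (1 - δ) * (v i : ℝ))
    (π : Equiv.Perm (Fin d))
    (hi : (∀ i : Fin d, δ ≤ w (π i) ∧ w (π i) ≤ 1 + δ) ∧
          (∀ i j : Fin d, i ≤ j → w (π j) ≤ w (π i)))
    (hii : ∀ j : Fin d, (j : ℕ) + 1 < d → w j < 1)
    (hiii : ∀ (j : Fin d) (h : (j : ℕ) + 1 < d),
        w (π j) = w (π ⟨(j : ℕ) + 1, h⟩) → π j < π ⟨(j : ℕ) + 1, h⟩)
    (hiv : π.symm ⟨d - 1, by omega⟩ < ⟨d - 1, by omega⟩) :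
    admissible d (n + 1) v π ∧
      x ∈ kuhn d (fun i => (1 - δ) * (v i : ℝ) + δ) π := by
  have hn' : (1 : ℝ) ≤ n := by exact_mod_cast hn
  have hδ2 : δ * ((n : ℝ) + 2) = 1 := by
    rw [hδ]; field_simp
  have hδ0 : 0 < δ := by rw [hδ]; positivity
  have hδ1 : δ < 1 := by nlinarith
  have hwd : ∀ i, w i = x i - (1 - δ) * (v i : ℝ) := fun i => by rw [hw]
  have hwb : ∀ i : Fin d, δ ≤ w i ∧ w i ≤ 1 + δ := by
    intro i
    simpa using hi.1 (π.symm i)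
  obtain ⟨hx1, hx2⟩ := hx
  -- upper bound for v
  have hvn : ∀ i, (v i : ℝ) ≤ n := by
    intro i
    by_contra hcon
    push_neg at hcon
    have h1 : (n : ℤ) < v i := by exact_mod_cast hcon
    have h2 : (n : ℤ) + 1 ≤ v i := h1
    have h2r : (n : ℝ) + 1 ≤ (v i : ℝ) := by exact_mod_cast h2
    have h3 := (hwb i).1
    rw [hwd i] at h3
    have h4 := (hx1 i).2
    nlinarith [mul_nonneg (sub_nonneg.mpr hδ1.le) (sub_nonneg.mpr h2r)]
  -- monotonicity of v
  have hvmono : ∀ i j : Fin d, i ≤ j → (v j : ℝ) ≤ (v i : ℝ) := by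
    intro i j hij
    by_cases hcase : (i : ℕ) + 1 < d
    · by_contra hcon
      push_neg at hcon
      have h1 : v i < v j := by exact_mod_cast hcon
      have h2 : v i + 1 ≤ v j := h1
      have h2r : (v i : ℝ) + 1 ≤ (v j : ℝ) := by exact_mod_cast h2
      have hwi := hii i hcase
      have hwj := (hwb j).1
      rw [hwd] at hwi hwj
      have hxij := hx2 i j hij
      nlinarith [mul_nonneg (sub_nonneg.mpr hδ1.le)
        (by linarith : (0:ℝ) ≤ (v j : ℝ) - (v i : ℝ) - 1)]
    · have hieq : (i : ℕ) = d - 1 := by have := i.isLt; omega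
      have hijn : (i : ℕ) ≤ (j : ℕ) := hij
      have : i = j := Fin.ext (by have := j.isLt; omega)
      rw [this]
  refine ⟨⟨⟨?_, ?_⟩, ?_⟩, ⟨?_, ?_⟩⟩
  · -- bounds of v in Sset
    intro i
    constructor
    · show (0:ℝ) ≤ ((v i : ℤ) : ℝ)
      exact_mod_cast hv i
    · have h := hvn i
      push_cast at h ⊢
      linarith
  · -- monotone v
    exact fun i j hij => hvmono i j hij
  · -- admissibility order condition
    intro j hjd hvj
    by_contra hcon
    push_neg at hcon
    have hne : π.symm (⟨(j : ℕ) + 1, hjd⟩ : Fin d) ≠ π.symm j := by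
      intro h
      have := π.symm.injective h
      rw [Fin.ext_iff] at this
      simp at this
    have hlt : π.symm (⟨(j : ℕ) + 1, hjd⟩ : Fin d) < π.symm j :=
      lt_of_le_of_ne hcon hne
    have hxx : x ⟨(j : ℕ) + 1, hjd⟩ ≤ x j := hx2 j _ (by simp [Fin.le_def])
    have hvr : (v j : ℝ) = (v (⟨(j : ℕ) + 1, hjd⟩ : Fin d) : ℝ) := by
      exact_mod_cast hvj
    have hge : w ⟨(j : ℕ) + 1, hjd⟩ ≤ w j := by
      rw [hwd, hwd, hvr]; linarith
    have hle : w j ≤ w ⟨(j : ℕ) + 1, hjd⟩ := by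
      have := hi.2 _ _ hlt.le
      simpa using this
    have heq : w (π (π.symm (⟨(j : ℕ) + 1, hjd⟩ : Fin d))) = w (π (π.symm j)) := by
      simp
      exact le_antisymm hle hge |>.symm
    have hnat : ((π.symm j : Fin d) : ℕ) =
        ((π.symm (⟨(j : ℕ) + 1, hjd⟩ : Fin d) : Fin d) : ℕ) +
          (((π.symm j : Fin d) : ℕ) - ((π.symm (⟨(j : ℕ) + 1, hjd⟩ : Fin d) : Fin d) : ℕ) - 1) + 1 := by
      have := (Fin.lt_def.mp hlt)
      omega
    have hfin := chain_lt w π hi.2 hiii _ (π.symm j) (π.symm ⟨(j : ℕ) + 1, hjd⟩) hnat heq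
    have : (j : ℕ) + 1 < (j : ℕ) := by
      simpa [Fin.lt_def] using hfin
    omega
  · -- kuhn bounds
    intro i
    have h := hi.1 i
    rw [hwd] at h
    constructor <;> simp <;> linarith [h.1, h.2]
  · -- kuhn monotone
    intro i j hij
    have := hi.2 i j hij
    rw [hwd, hwd] at this
    simp
    linarith
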